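/- Let K = k[x, x⁻¹], B = k[x], C = k[x,x⁻¹,y] with the k-algebra map C → K sending x to x and y to 0, and the inclusion B → K. Then the fiber product A = B ×_K C, identified with the subring {f ∈ k[x,x⁻¹,y] : f(x,0) ∈ k[x]} of C, is not a Noetherian ring. -/

import Mathlib

set_option synthInstance.maxHeartbeats 1000000
set_option maxHeartbeats 1000000

open Polynomial
open LaurentPolynomial

/-- The fiber product `A = k[x] ×_{k[x,x⁻¹]} k[x,x⁻¹,y]` (with `y ↦ 0`),
identified with the subring `{f ∈ k[x,x⁻¹,y] : f(x,0) ∈ k[x]}`,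
is not Noetherian. -/
theorem ferrand_example_not_noetherian (k : Type*) [Field k] :
    ¬ IsNoetherianRing
      (Subring.comap (Polynomial.evalRingHom (0 : LaurentPolynomial k))
        (Polynomial.toLaurent : k[X] →+* LaurentPolynomial k).range) := by
  set Rng := (Polynomial.toLaurent : k[X] →+* LaurentPolynomial k).range with hRng
  set A := Subring.comap (Polynomial.evalRingHom (0 : LaurentPolynomial k)) Rng with hA
  intro hN
  letI : IsNoetherianRing A := hN
  -- the "conductor" ideal
  let φ : A →+* LaurentPolynomial k :=
    (Polynomial.evalRingHom (0 : LaurentPolynomial k)).comp A.subtype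
  have hIfg : (RingHom.ker φ).FG := (isNoetherianRing_iff_ideal_fg A).mp hN _
  obtain ⟨S, hS⟩ := hIfg
  -- choose a common power of T clearing denominators of the X-coefficients of generators
  choose n p hp using fun g : A => LaurentPolynomial.exists_T_pow ((g : (LaurentPolynomial k)[X]).coeff 1)
  set N : ℕ := S.sup n with hNdef
  have hTmem : ∀ m : ℕ, (T m : LaurentPolynomial k) ∈ Rng := by
    intro m
    exact ⟨X ^ m, Polynomial.toLaurent_X_pow m⟩
  have hgen : ∀ g ∈ S, ((g : A) : (LaurentPolynomial k)[X]).coeff 1 * T (N : ℤ) ∈ Rng := by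
    intro g hg
    have hle : n g ≤ N := Finset.le_sup hg
    have : ((g : (LaurentPolynomial k)[X]).coeff 1 * T (n g)) * T ((N - n g : ℕ) : ℤ) ∈ Rng :=
      Rng.mul_mem ⟨p g, hp g⟩ (hTmem _)
    have hT : (T (n g) : LaurentPolynomial k) * T ((N - n g : ℕ) : ℤ) = T (N : ℤ) := by
      rw [← T_add]
      congr 1
      omega
    rwa [mul_assoc, hT] at this
  -- key: for all f ∈ ker φ, coeff 1 * T N ∈ Rng
  have key : ∀ f : A, f ∈ RingHom.ker φ →
      ((f : (LaurentPolynomial k)[X]).coeff 1) * T (N : ℤ) ∈ Rng := by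
    intro f hf
    rw [← hS] at hf
    rw [Ideal.span, Submodule.mem_span_finset] at hf
    obtain ⟨c, -, hc⟩ := hf
    have hcoe : ((f : A) : (LaurentPolynomial k)[X])
        = ∑ g ∈ S, ((c g : (LaurentPolynomial k)[X]) * (g : (LaurentPolynomial k)[X])) := by
      rw [← hc]
      push_cast [smul_eq_mul]
      rfl
    have hsum : ((f : (LaurentPolynomial k)[X]).coeff 1) * T (N : ℤ)
        = ∑ g ∈ S, ((c g : (LaurentPolynomial k)[X]) * (g : (LaurentPolynomial k)[X])).coeff 1
            * T (N : ℤ) := by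
      rw [hcoe, Polynomial.finset_sum_coeff, Finset.sum_mul]
    rw [hsum]
    refine Rng.sum_mem fun g hg => ?_
    have hgI : (g : A) ∈ RingHom.ker φ := hS ▸ Ideal.subset_span hg
    have hg0 : ((g : A) : (LaurentPolynomial k)[X]).coeff 0 = 0 := by
      have := hgI
      rw [RingHom.mem_ker] at this
      simpa [Polynomial.coeff_zero_eq_eval_zero, φ] using this
    have hexp : ((c g : (LaurentPolynomial k)[X]) * (g : (LaurentPolynomial k)[X])).coeff 1
        = (c g : (LaurentPolynomial k)[X]).coeff 0 * ((g : A) : (LaurentPolynomial k)[X]).coeff 1 := by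
      rw [Polynomial.coeff_mul]
      rw [show (1:ℕ) = 0 + 1 from rfl, Finset.Nat.sum_antidiagonal_eq_sum_range_succ_mk]
      simp [Finset.sum_range_succ, hg0]
    rw [hexp, mul_assoc]
    have hc0 : (c g : (LaurentPolynomial k)[X]).coeff 0 ∈ Rng := by
      have h2 : Polynomial.evalRingHom (0 : LaurentPolynomial k)
          ((c g : A) : (LaurentPolynomial k)[X]) ∈ Rng := (c g).2
      rw [Polynomial.coeff_zero_eq_eval_zero]
      exact h2
    exact Rng.mul_mem hc0 (hgen g hg)
  -- the offending element
  have h0mem : (Polynomial.C (T (-(N + 1) : ℤ)) * X : (LaurentPolynomial k)[X]) ∈ A := by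
    show Polynomial.evalRingHom (0 : LaurentPolynomial k) _ ∈ Rng
    simp [Rng.zero_mem]
  let f₀ : A := ⟨Polynomial.C (T (-(N + 1) : ℤ)) * X, h0mem⟩
  have hf₀ : f₀ ∈ RingHom.ker φ := by
    simp [RingHom.mem_ker, φ, f₀]
  have := key f₀ hf₀
  have hc : ((f₀ : (LaurentPolynomial k)[X]).coeff 1) = T (-(N + 1) : ℤ) := by
    simp [f₀]
  rw [hc] at this
  rw [← T_add] at this
  have h1 : (-(N + 1 : ℤ)) + N = -1 := by ring
  rw [h1] at this
  obtain ⟨q, hq⟩ := this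
  have : toLaurent (q * X) = (1 : LaurentPolynomial k) := by
    rw [map_mul, hq, Polynomial.toLaurent_X, ← T_add]
    norm_num
  have hqX : q * X = 1 := Polynomial.toLaurent_injective (by rw [this, map_one])
  exact Polynomial.not_isUnit_X (IsUnit.of_mul_eq_one (a := X) q (by rw [mul_comm]; exact hqX))
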